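/- Suppose ‖πX(t,s) − X(t,s)π‖ ≤ 2η for all s,t in [0,T] with X(t,s) unitary, ‖π B(Id−π_N)‖ ≤ δ, ‖B‖ < ∞, and π Υ_t ψ − π X(t,0)ψ = ∫₀^t u(s)[πX(t,s)]π_N B(Id−π_N)Υ_s ψ ds where Υ_s is unitary and π ≤ π_N (π π_N = π). Then ‖π Υ_t ψ − π X(t,0) ψ‖ ≤ (∫₀^T |u|)·(δ + 2η‖B‖) for all t in [0,T] and unit vectors ψ. -/

import Mathlib

lemma proj_contr' {H : Type*} [NormedAddCommGroup H] [InnerProductSpace ℂ H] [CompleteSpace H]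
    (Q : H →L[ℂ] H) (hQ1 : Q ∘L Q = Q) (hQ2 : ContinuousLinearMap.adjoint Q = Q) (x : H) :
    ‖Q x‖ ≤ ‖x‖ := by
  rcases eq_or_lt_of_le (norm_nonneg (Q x)) with h0 | h0
  · rw [← h0]; exact norm_nonneg x
  have h2 : (inner ℂ (Q x) (Q x) : ℂ) = inner ℂ (Q x) x := by
    have h := ContinuousLinearMap.adjoint_inner_right Q (Q x) x
    rw [hQ2] at h
    have hqq : Q (Q x) = Q x := by
      have : Q (Q x) = (Q ∘L Q) x := rfl
      rw [this, hQ1]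
    rw [h, hqq]
  have h1 : (‖Q x‖ : ℝ)^2 = RCLike.re (inner ℂ (Q x) x : ℂ) := by
    rw [← h2, inner_self_eq_norm_sq]
  have h3 : RCLike.re (inner ℂ (Q x) x : ℂ) ≤ ‖Q x‖ * ‖x‖ := by
    calc RCLike.re (inner ℂ (Q x) x : ℂ) ≤ ‖(inner ℂ (Q x) x : ℂ)‖ := RCLike.re_le_norm _
      _ ≤ ‖Q x‖ * ‖x‖ := norm_inner_le_norm _ _
  nlinarith [h1, h3]

open MeasureTheory in
/-- Abstract form of the paper's key estimate: from the commutator bound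
`‖πX(t,s) − X(t,s)π‖ ≤ 2η`, the truncation bound `‖πB(Id−π_N)‖ ≤ δ`, unitarity, `π ≤ π_N`,
and the variation-of-constants identity, one gets
`‖πΥ_t ψ − πX(t,0)ψ‖ ≤ (∫₀ᵀ|u|)(δ + 2η‖B‖)` for unit vectors `ψ`. -/
theorem stmt16 {H : Type*} [NormedAddCommGroup H] [InnerProductSpace ℂ H] [CompleteSpace H]
    (T η δ : ℝ) (hT : 0 ≤ T) (hη : 0 < η)
    (u : ℝ → ℝ) (hu : IntervalIntegrable u volume 0 T)
    (B P Q : H →L[ℂ] H)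
    (hPQ : P ∘L Q = P)
    (hP1 : P ∘L P = P) (hP2 : ContinuousLinearMap.adjoint P = P)
    (hQ1 : Q ∘L Q = Q) (hQ2 : ContinuousLinearMap.adjoint Q = Q)
    (X : ℝ → ℝ → (H →L[ℂ] H))
    (hXu : ∀ t s : ℝ, ∀ ψ : H, ‖X t s ψ‖ = ‖ψ‖)
    (hcomm : ∀ t ∈ Set.Icc (0:ℝ) T, ∀ s ∈ Set.Icc (0:ℝ) T,
      ‖P ∘L (X t s) - (X t s) ∘L P‖ ≤ 2 * η)
    (hδ : ‖P ∘L B ∘L (1 - Q)‖ ≤ δ)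
    (Υ : ℝ → (H →L[ℂ] H)) (hΥu : ∀ s : ℝ, ∀ ψ' : H, ‖Υ s ψ'‖ = ‖ψ'‖)
    (ψ : H) (hψ : ‖ψ‖ = 1)
    (hid : ∀ t ∈ Set.Icc (0:ℝ) T,
      P (Υ t ψ) - P (X t 0 ψ)
        = ∫ s in (0:ℝ)..t, u s • ((P ∘L (X t s) ∘L Q ∘L B ∘L (1 - Q)) (Υ s ψ))) :
    ∀ t ∈ Set.Icc (0:ℝ) T,
      ‖P (Υ t ψ) - P (X t 0 ψ)‖ ≤ (∫ s in (0:ℝ)..T, |u s|) * (δ + 2 * η * ‖B‖) := by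
  intro t ht
  obtain ⟨ht0, htT⟩ := ht
  set C : ℝ := δ + 2 * η * ‖B‖ with hCdef
  have hδ0 : 0 ≤ δ := le_trans (norm_nonneg _) hδ
  have hC0 : 0 ≤ C := by positivity
  -- 1 - Q is a self-adjoint idempotent
  have hOneQ1 : (1 - Q) ∘L (1 - Q) = 1 - Q := by
    ext x
    have hqq : Q (Q x) = Q x := by
      have h : Q (Q x) = (Q ∘L Q) x := rfl
      rw [h, hQ1]
    simp [hqq]
  have hOneQ2 : ContinuousLinearMap.adjoint (1 - Q) = 1 - Q := by
    rw [map_sub, hQ2]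
    congr 1
    exact ContinuousLinearMap.adjoint_id
  -- key operator bound
  have key : ∀ s ∈ Set.Icc (0:ℝ) T, ∀ w : H,
      ‖(P ∘L (X t s) ∘L Q ∘L B ∘L (1 - Q)) w‖ ≤ C * ‖w‖ := by
    intro s hs w
    set z : H := Q (B ((1 - Q) w)) with hzdef
    have hPz : P z = (P ∘L B ∘L (1 - Q)) w := by
      have h1 : P z = (P ∘L Q) (B ((1 - Q) w)) := rfl
      rw [h1, hPQ]; rfl
    have happ : (P ∘L (X t s) ∘L Q ∘L B ∘L (1 - Q)) w
        = X t s ((P ∘L B ∘L (1 - Q)) w) + (P ∘L X t s - X t s ∘L P) z := by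
      rw [← hPz]
      simp only [ContinuousLinearMap.comp_apply, ContinuousLinearMap.sub_apply]
      abel
    rw [happ]
    have e1 : ‖X t s ((P ∘L B ∘L (1 - Q)) w)‖ ≤ δ * ‖w‖ := by
      rw [hXu]
      exact le_trans ((P ∘L B ∘L (1 - Q)).le_opNorm w)
        (mul_le_mul_of_nonneg_right hδ (norm_nonneg w))
    have hz : ‖z‖ ≤ ‖B‖ * ‖w‖ := by
      calc ‖z‖ ≤ ‖B ((1 - Q) w)‖ := proj_contr' Q hQ1 hQ2 _
        _ ≤ ‖B‖ * ‖(1 - Q) w‖ := B.le_opNorm _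
        _ ≤ ‖B‖ * ‖w‖ :=
            mul_le_mul_of_nonneg_left (proj_contr' (1 - Q) hOneQ1 hOneQ2 w) (norm_nonneg B)
    have e2 : ‖(P ∘L X t s - X t s ∘L P) z‖ ≤ 2 * η * (‖B‖ * ‖w‖) := by
      calc ‖(P ∘L X t s - X t s ∘L P) z‖ ≤ ‖P ∘L X t s - X t s ∘L P‖ * ‖z‖ :=
            (P ∘L X t s - X t s ∘L P).le_opNorm z
        _ ≤ (2 * η) * (‖B‖ * ‖w‖) := by
            apply mul_le_mul (hcomm t ⟨ht0, htT⟩ s hs) hz (norm_nonneg z)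
            positivity
    calc ‖X t s ((P ∘L B ∘L (1 - Q)) w) + (P ∘L X t s - X t s ∘L P) z‖
        ≤ ‖X t s ((P ∘L B ∘L (1 - Q)) w)‖ + ‖(P ∘L X t s - X t s ∘L P) z‖ := norm_add_le _ _
      _ ≤ δ * ‖w‖ + 2 * η * (‖B‖ * ‖w‖) := add_le_add e1 e2
      _ = C * ‖w‖ := by rw [hCdef]; ring
  -- integrability of the bound
  have huT : IntervalIntegrable (fun s => |u s| * C) volume 0 T := by
    have := hu.norm
    simpa [Real.norm_eq_abs] using this.mul_const C
  have hut : IntervalIntegrable (fun s => |u s| * C) volume 0 t :=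
    huT.mono_set (by
      rw [Set.uIcc_of_le ht0, Set.uIcc_of_le hT]
      exact Set.Icc_subset_Icc le_rfl htT)
  rw [hid t ⟨ht0, htT⟩]
  have step1 : ‖∫ s in (0:ℝ)..t, u s • ((P ∘L (X t s) ∘L Q ∘L B ∘L (1 - Q)) (Υ s ψ))‖
      ≤ |∫ s in (0:ℝ)..t, |u s| * C| := by
    apply intervalIntegral.norm_integral_le_abs_of_norm_le _ hut
    filter_upwards [ae_restrict_mem measurableSet_Ioc] with s hs
    rw [Set.uIoc_of_le ht0] at hs
    have hsIcc : s ∈ Set.Icc (0:ℝ) T := ⟨le_of_lt hs.1, le_trans hs.2 htT⟩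
    rw [norm_smul, Real.norm_eq_abs]
    have := key s hsIcc (Υ s ψ)
    rw [hΥu s ψ, hψ, mul_one] at this
    exact mul_le_mul_of_nonneg_left this (abs_nonneg _)
  refine le_trans step1 ?_
  have habs : |∫ s in (0:ℝ)..t, |u s| * C| = ∫ s in (0:ℝ)..t, |u s| * C := by
    apply abs_of_nonneg
    apply intervalIntegral.integral_nonneg ht0
    intro s _
    positivity
  rw [habs]
  have hmono : (∫ s in (0:ℝ)..t, |u s| * C) ≤ ∫ s in (0:ℝ)..T, |u s| * C := by
    apply intervalIntegral.integral_mono_interval le_rfl ht0 htT _ huT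
    filter_upwards with s
    positivity
  refine le_trans hmono ?_
  rw [intervalIntegral.integral_mul_const]
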